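/- Let z₀, ..., z_{k-1} ∈ ℝ^d, let (p₀, ..., p_{k-1}) be a probability distribution with p₀ > 0, and let Z = Σᵢ pᵢ zᵢ zᵢᵀ. Let M be a symmetric d×d matrix, let u₁, ..., u_ℓ be the top ℓ singular vectors of M, and U = [u₁, ..., u_ℓ]. If ℓ < k then ‖(I − UUᵀ) z₀‖² ≤ (2(ℓ+1)‖M − Z‖ + maxⱼ ‖zⱼ‖²) / ((ℓ+1) p₀), and if ℓ ≥ k then ‖(I − UUᵀ) z₀‖² ≤ 2‖M − Z‖ / p₀. -/

import Mathlib

open Matrix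
open scoped RealInnerProductSpace

noncomputable def opNorm {d : ℕ} (M : Matrix (Fin d) (Fin d) ℝ) : ℝ :=
  ‖Matrix.toEuclideanCLM (𝕜 := ℝ) M‖
def fromE {d : ℕ} (x : EuclideanSpace ℝ (Fin d)) : Fin d → ℝ :=
  (WithLp.equiv 2 (Fin d → ℝ)) x
noncomputable def toE {d : ℕ} (x : Fin d → ℝ) : EuclideanSpace ℝ (Fin d) :=
  (WithLp.equiv 2 (Fin d → ℝ)).symm x

variable {d k : ℕ}

lemma toE_fromE (x : EuclideanSpace ℝ (Fin d)) : toE (fromE x) = x := rfl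
lemma toE_smul (c : ℝ) (a : Fin d → ℝ) : toE (c • a) = c • toE a := rfl
lemma toE_sub (a b : Fin d → ℝ) : toE (a - b) = toE a - toE b := rfl
lemma toE_sum {ι : Type*} (s : Finset ι) (f : ι → (Fin d → ℝ)) :
    toE (∑ i ∈ s, f i) = ∑ i ∈ s, toE (f i) := WithLp.toLp_sum 2 _ s f

lemma inner_eq_dot (x y : EuclideanSpace ℝ (Fin d)) : ⟪x, y⟫ = fromE x ⬝ᵥ fromE y := by
  simp [PiLp.inner_apply, RCLike.inner_apply, conj_trivial, fromE, dotProduct, mul_comm]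

lemma sum_mulVec' {ι : Type*} (s : Finset ι) (A : ι → Matrix (Fin d) (Fin d) ℝ)
    (v : Fin d → ℝ) : (∑ i ∈ s, A i) *ᵥ v = ∑ i ∈ s, A i *ᵥ v := by
  ext j
  simp [Matrix.mulVec, dotProduct, Finset.sum_apply, Finset.sum_mul, Matrix.sum_apply]
  rw [Finset.sum_comm]

lemma vecMulVec_mulVec' (a b v : Fin d → ℝ) :
    vecMulVec a b *ᵥ v = (b ⬝ᵥ v) • a := by
  ext j
  simp [Matrix.mulVec, dotProduct, vecMulVec_apply, Finset.sum_mul, Finset.mul_sum,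
    mul_comm, mul_assoc, mul_left_comm]

lemma toE_mulVec (A : Matrix (Fin d) (Fin d) ℝ) (x : EuclideanSpace ℝ (Fin d)) :
    toE (A *ᵥ fromE x) = Matrix.toEuclideanCLM (𝕜 := ℝ) A x := by
  rw [show x = toE (fromE x) from rfl]
  exact (Matrix.toEuclideanCLM_toLp A (fromE x)).symm

lemma norm_mulVec_le (A : Matrix (Fin d) (Fin d) ℝ) (x : EuclideanSpace ℝ (Fin d)) :
    ‖toE (A *ᵥ fromE x)‖ ≤ opNorm A * ‖x‖ := by
  rw [toE_mulVec]; exact (Matrix.toEuclideanCLM (𝕜 := ℝ) A).le_opNorm x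

lemma proj_mulVec {ℓ : ℕ} (u : Fin ℓ → EuclideanSpace ℝ (Fin d))
    (y : EuclideanSpace ℝ (Fin d)) :
    toE ((∑ j, vecMulVec (fromE (u j)) (fromE (u j))) *ᵥ fromE y)
      = ∑ j, ⟪u j, y⟫ • u j := by
  rw [sum_mulVec', toE_sum]
  refine Finset.sum_congr rfl fun j _ => ?_
  rw [vecMulVec_mulVec', inner_eq_dot]
  exact toE_smul _ _

lemma Z_mulVec (p : Fin k → ℝ) (z : Fin k → EuclideanSpace ℝ (Fin d))
    (y : EuclideanSpace ℝ (Fin d)) :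
    toE ((∑ i, p i • vecMulVec (fromE (z i)) (fromE (z i))) *ᵥ fromE y)
      = ∑ i, (p i * ⟪z i, y⟫) • z i := by
  rw [sum_mulVec', toE_sum]
  refine Finset.sum_congr rfl fun i _ => ?_
  rw [smul_mulVec, vecMulVec_mulVec', inner_eq_dot]
  rw [show (p i • ((fromE (z i) ⬝ᵥ fromE y) • fromE (z i))) =
    (p i * (fromE (z i) ⬝ᵥ fromE y)) • fromE (z i) from smul_smul _ _ _]
  exact toE_smul _ _

lemma inner_Z (p : Fin k → ℝ) (z : Fin k → EuclideanSpace ℝ (Fin d))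
    (y : EuclideanSpace ℝ (Fin d)) :
    ⟪y, toE ((∑ i, p i • vecMulVec (fromE (z i)) (fromE (z i))) *ᵥ fromE y)⟫
      = ∑ i, p i * ⟪z i, y⟫ ^ 2 := by
  rw [Z_mulVec, inner_sum]
  refine Finset.sum_congr rfl fun i _ => ?_
  rw [real_inner_smul_right, real_inner_comm]
  ring

lemma inner_mulVec_symm (M : Matrix (Fin d) (Fin d) ℝ) (hM : M.IsHermitian)
    (a b : EuclideanSpace ℝ (Fin d)) :
    ⟪a, toE (M *ᵥ fromE b)⟫ = ⟪toE (M *ᵥ fromE a), b⟫ := by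
  rw [inner_eq_dot, inner_eq_dot]
  show fromE a ⬝ᵥ (M *ᵥ fromE b) = (M *ᵥ fromE a) ⬝ᵥ fromE b
  rw [Matrix.dotProduct_mulVec, ← Matrix.mulVec_transpose]
  congr 1
  rw [show Mᵀ = M from by simpa using (congrArg Matrix.transpose hM).symm]

lemma eig_inner (M : Matrix (Fin d) (Fin d) ℝ) (hM : M.IsHermitian)
    (i : Fin d) (x : EuclideanSpace ℝ (Fin d)) :
    ⟪hM.eigenvectorBasis i, toE (M *ᵥ fromE x)⟫
      = hM.eigenvalues i * ⟪hM.eigenvectorBasis i, x⟫ := by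
  rw [inner_mulVec_symm M hM]
  rw [show (M *ᵥ fromE (hM.eigenvectorBasis i)) = hM.eigenvalues i • fromE (hM.eigenvectorBasis i)
    from hM.mulVec_eigenvectorBasis i]
  rw [toE_smul, toE_fromE, real_inner_smul_left]

lemma inner_M_expand (M : Matrix (Fin d) (Fin d) ℝ) (hM : M.IsHermitian)
    (x : EuclideanSpace ℝ (Fin d)) :
    ⟪x, toE (M *ᵥ fromE x)⟫ = ∑ i, hM.eigenvalues i * ⟪hM.eigenvectorBasis i, x⟫ ^ 2 := by
  rw [← hM.eigenvectorBasis.sum_inner_mul_inner x (toE (M *ᵥ fromE x))]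
  refine Finset.sum_congr rfl fun i _ => ?_
  rw [eig_inner M hM, real_inner_comm x]
  ring

lemma parseval (b : OrthonormalBasis (Fin d) ℝ (EuclideanSpace ℝ (Fin d)))
    (x : EuclideanSpace ℝ (Fin d)) :
    ∑ i, ⟪b i, x⟫ ^ 2 = ‖x‖ ^ 2 := by
  have h := b.sum_inner_mul_inner x x
  rw [← real_inner_self_eq_norm_sq, ← h]
  refine Finset.sum_congr rfl fun i _ => ?_
  rw [real_inner_comm x]; ring

lemma inner_A_abs_le (A : Matrix (Fin d) (Fin d) ℝ) (y : EuclideanSpace ℝ (Fin d)) :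
    |⟪y, toE (A *ᵥ fromE y)⟫| ≤ opNorm A * ‖y‖ ^ 2 := by
  calc |⟪y, toE (A *ᵥ fromE y)⟫| ≤ ‖y‖ * ‖toE (A *ᵥ fromE y)‖ := abs_real_inner_le_norm _ _
    _ ≤ ‖y‖ * (opNorm A * ‖y‖) :=
        mul_le_mul_of_nonneg_left (norm_mulVec_le A y) (norm_nonneg _)
    _ = opNorm A * ‖y‖ ^ 2 := by ring

lemma sum_comp_le {a b : ℕ} (ι : Fin a → Fin b) (hι : Function.Injective ι)
    (g : Fin b → ℝ) (hg : ∀ m, 0 ≤ g m) : ∑ j, g (ι j) ≤ ∑ m, g m := by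
  classical
  calc ∑ j, g (ι j) = ∑ m ∈ Finset.univ.image ι, g m :=
        (Finset.sum_image (fun x _ y _ h => hι h)).symm
    _ ≤ ∑ m, g m :=
        Finset.sum_le_sum_of_subset_of_nonneg (Finset.subset_univ _) (fun m _ _ => hg m)

set_option maxHeartbeats 2000000 in
/-- Let `Z = Σᵢ pᵢ zᵢ zᵢᵀ` with `(pᵢ)` a probability distribution, `p₀ > 0`.
Let `M` be symmetric and `u₁, ..., u_ℓ` its top `ℓ` singular vectors (orthonormal eigenvectors
of `M` for its `ℓ` largest singular values, i.e. eigenvalues ordered by absolute value),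
`U = [u₁, ..., u_ℓ]`. If `ℓ < k` then
`‖(I − UUᵀ)z₀‖² ≤ (2(ℓ+1)‖M − Z‖ + maxⱼ ‖zⱼ‖²)/((ℓ+1) p₀)`,
and if `ℓ ≥ k` then `‖(I − UUᵀ)z₀‖² ≤ 2‖M − Z‖/p₀`. -/
theorem subspace_recovery {d ℓ k : ℕ} [NeZero k] (hℓd : ℓ ≤ d)
    (p : Fin k → ℝ) (hp : ∀ i, 0 ≤ p i) (hp1 : ∑ i, p i = 1) (hp0 : 0 < p 0)
    (z : Fin k → EuclideanSpace ℝ (Fin d))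
    (M : Matrix (Fin d) (Fin d) ℝ) (hM : M.IsHermitian)
    (u : Fin ℓ → EuclideanSpace ℝ (Fin d))
    (hu : ∀ j : Fin ℓ, u j = hM.eigenvectorBasis
      ((Tuple.sort fun i => |hM.eigenvalues i|)
        ⟨d - 1 - (j : ℕ), by have := j.isLt; omega⟩)) :
    (ℓ < k →
      ‖toE ((1 - ∑ j, vecMulVec (fromE (u j)) (fromE (u j))).mulVec (fromE (z 0)))‖ ^ 2
        ≤ (2 * (ℓ + 1) * opNorm (M - ∑ i, p i • vecMulVec (fromE (z i)) (fromE (z i)))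
            + ⨆ j, ‖z j‖ ^ 2) / ((ℓ + 1) * p 0)) ∧
    (k ≤ ℓ →
      ‖toE ((1 - ∑ j, vecMulVec (fromE (u j)) (fromE (u j))).mulVec (fromE (z 0)))‖ ^ 2
        ≤ 2 * opNorm (M - ∑ i, p i • vecMulVec (fromE (z i)) (fromE (z i))) / p 0) := by
  classical
  set Zm := ∑ i, p i • vecMulVec (fromE (z i)) (fromE (z i)) with hZm
  set x := toE ((1 - ∑ j, vecMulVec (fromE (u j)) (fromE (u j))) *ᵥ fromE (z 0)) with hxe
  set ε := opNorm (M - Zm) with hεe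
  have hε0 : 0 ≤ ε := norm_nonneg _
  set T := ⨆ j, ‖z j‖ ^ 2 with hTe
  have hT : ∀ i, ‖z i‖ ^ 2 ≤ T := fun i =>
    le_ciSup (f := fun j => ‖z j‖ ^ 2) (Set.Finite.bddAbove (Set.finite_range _)) i
  have hT0 : 0 ≤ T := le_trans (sq_nonneg _) (hT 0)
  have hL0 : (0:ℝ) < (ℓ : ℝ) + 1 := by positivity
  set s := Tuple.sort fun i => |hM.eigenvalues i| with hse
  set B := hM.eigenvectorBasis with hBe
  -- the index map is injective
  have hι : Function.Injective (fun j : Fin ℓ =>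
      s (⟨d - 1 - (j:ℕ), by have := j.isLt; omega⟩ : Fin d)) := by
    intro a b hab
    have h2 := s.injective hab
    have h3 : d - 1 - (a:ℕ) = d - 1 - (b:ℕ) := congrArg Fin.val h2
    have ha := a.isLt; have hb := b.isLt
    exact Fin.ext (by omega)
  have huo : Orthonormal ℝ u := by
    have h := (B.orthonormal).comp _ hι
    have hufun : u = fun j : Fin ℓ =>
        B (s (⟨d - 1 - (j:ℕ), by have := j.isLt; omega⟩ : Fin d)) := funext hu
    rw [hufun]; exact h
  have hx : x = z 0 - ∑ j, ⟪u j, z 0⟫ • u j := by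
    rw [hxe, sub_mulVec, one_mulVec, toE_sub, toE_fromE, proj_mulVec]
  have hxu : ∀ j : Fin ℓ, ⟪u j, x⟫ = 0 := by
    intro j
    rw [hx, inner_sub_right, huo.inner_right_fintype (fun j' => ⟪u j', z 0⟫) j, sub_self]
  have hxz : ⟪x, z 0⟫ = ‖x‖ ^ 2 := by
    have hz0 : z 0 = x + ∑ j, ⟪u j, z 0⟫ • u j := by rw [hx]; abel
    rw [hz0, inner_add_right, real_inner_self_eq_norm_sq, inner_sum]
    have h9 : ∑ j, ⟪x, ⟪u j, z 0⟫ • u j⟫ = 0 := Finset.sum_eq_zero fun j _ => by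
      rw [real_inner_smul_right, show ⟪x, u j⟫ = 0 from by rw [real_inner_comm]; exact hxu j, mul_zero]
    rw [h9, add_zero]
  have hchain : ∀ σ' : ℝ, 0 ≤ σ' → ⟪x, toE (M *ᵥ fromE x)⟫ ≤ σ' * ‖x‖ ^ 2 →
      p 0 * ‖x‖ ^ 2 ≤ σ' + ε := by
    intro σ' hσ' hMxb
    by_cases hx0 : x = 0
    · rw [hx0]; simp; linarith
    · have hxpos : 0 < ‖x‖ ^ 2 := pow_pos (norm_pos_iff.mpr hx0) 2
      have h1 : p 0 * (‖x‖ ^ 2 * ‖x‖ ^ 2) ≤ ∑ i, p i * ⟪z i, x⟫ ^ 2 := by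
        have hs := Finset.single_le_sum (f := fun i => p i * ⟪z i, x⟫ ^ 2)
          (fun i _ => mul_nonneg (hp i) (sq_nonneg _)) (Finset.mem_univ 0)
        have h0 : ⟪z 0, x⟫ = ‖x‖ ^ 2 := by rw [real_inner_comm]; exact hxz
        calc p 0 * (‖x‖^2 * ‖x‖^2) = p 0 * ⟪z 0, x⟫ ^ 2 := by rw [h0]; ring
          _ ≤ _ := hs
      have h2 : ∑ i, p i * ⟪z i, x⟫ ^ 2 = ⟪x, toE (Zm *ᵥ fromE x)⟫ := by
        rw [hZm]; exact (inner_Z p z x).symm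
      have h3 : ⟪x, toE (Zm *ᵥ fromE x)⟫
          = ⟪x, toE (M *ᵥ fromE x)⟫ - ⟪x, toE ((M - Zm) *ᵥ fromE x)⟫ := by
        rw [sub_mulVec, toE_sub, inner_sub_right]; ring
      have h4 := abs_le.mp (inner_A_abs_le (M - Zm) x)
      have h5 : (p 0 * ‖x‖ ^ 2) * ‖x‖ ^ 2 ≤ (σ' + ε) * ‖x‖ ^ 2 := by nlinarith
      exact le_of_mul_le_mul_right h5 hxpos
  have hkey : ∃ σ' : ℝ, 0 ≤ σ' ∧ p 0 * ‖x‖ ^ 2 ≤ σ' + ε ∧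
      (((ℓ:ℝ) + 1) * σ' ≤ T + ((ℓ:ℝ) + 1) * ε) ∧ (k ≤ ℓ → σ' ≤ ε) := by
    rcases lt_or_eq_of_le hℓd with hld | hld
    · -- ℓ < d
      set σ := |hM.eigenvalues (s ⟨d - 1 - ℓ, by omega⟩)| with hσe
      have hmono : ∀ m m' : Fin d, m ≤ m' →
          |hM.eigenvalues (s m)| ≤ |hM.eigenvalues (s m')| := by
        intro m m' hmm
        exact Tuple.monotone_sort (fun i => |hM.eigenvalues i|) hmm
      refine ⟨σ, abs_nonneg _, ?_, ?_, ?_⟩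
      · -- chain with σ
        refine hchain σ (abs_nonneg _) ?_
        rw [inner_M_expand M hM x, ← parseval hM.eigenvectorBasis x, Finset.mul_sum]
        refine Finset.sum_le_sum fun i _ => ?_
        by_cases hc : ⟪hM.eigenvectorBasis i, x⟫ = 0
        · rw [hc]; simp
        · have hle : |hM.eigenvalues i| ≤ σ := by
            by_contra hgt
            push_neg at hgt
            have him : s (s.symm i) = i := Equiv.apply_symm_apply _ _
            have h1 : ¬ ((s.symm i) ≤ (⟨d - 1 - ℓ, by omega⟩ : Fin d)) := by
              intro hle2
              have h2 := hmono _ _ hle2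
              rw [him] at h2
              exact absurd h2 (not_le.mpr hgt)
            have hm2 : d - 1 - ℓ < ((s.symm i : Fin d) : ℕ) := not_le.mp h1
            have hmlt := (s.symm i).isLt
            have hjl : d - 1 - (s.symm i : ℕ) < ℓ := by omega
            have hmj : (⟨d - 1 - (d - 1 - ((s.symm i : Fin d) : ℕ)), by omega⟩ : Fin d)
                = s.symm i := Fin.ext (by simp; omega)
            have h5 := hxu ⟨d - 1 - (s.symm i : ℕ), hjl⟩
            rw [hu ⟨d - 1 - (s.symm i : ℕ), hjl⟩] at h5
            rw [show ((⟨d - 1 - ((⟨d - 1 - (s.symm i : ℕ), hjl⟩ : Fin ℓ) : ℕ), by omega⟩ : Fin d))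
              = s.symm i from Fin.ext (by simp; omega)] at h5
            rw [him] at h5
            exact hc h5
          have := mul_le_mul_of_nonneg_right (le_trans (le_abs_self _) hle)
            (sq_nonneg ⟪hM.eigenvectorBasis i, x⟫)
          exact this
      · -- (ℓ+1) σ ≤ T + (ℓ+1) ε
        have hνinj : Function.Injective (fun j : Fin (ℓ+1) =>
            s (⟨d - 1 - (j:ℕ), by have := j.isLt; omega⟩ : Fin d)) := by
          intro a b hab
          have h2 := s.injective hab
          have h3 : d - 1 - (a:ℕ) = d - 1 - (b:ℕ) := congrArg Fin.val h2
          have ha := a.isLt; have hb := b.isLt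
          exact Fin.ext (by omega)
        set F : Fin (ℓ+1) → EuclideanSpace ℝ (Fin d) := fun j =>
          hM.eigenvectorBasis (s ⟨d - 1 - (j:ℕ), by have := j.isLt; omega⟩) with hFe
        set lam : Fin (ℓ+1) → ℝ := fun j =>
          hM.eigenvalues (s ⟨d - 1 - (j:ℕ), by have := j.isLt; omega⟩) with hlame
        have hq : ∀ j : Fin (ℓ+1), σ ≤ (∑ i, p i * ⟪z i, F j⟫ ^ 2) + ε := by
          intro j
          have hσle : σ ≤ |lam j| := by
            refine hmono _ _ (Fin.mk_le_mk.mpr ?_)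
            have := j.isLt; omega
          have hv1 : ‖F j‖ = 1 := hM.eigenvectorBasis.orthonormal.1 _
          have hlam : ⟪F j, toE (M *ᵥ fromE (F j))⟫ = lam j := by
            rw [hFe, hlame]
            rw [eig_inner M hM, real_inner_self_eq_norm_sq,
              hM.eigenvectorBasis.orthonormal.1 _]
            ring
          have hsplit : ⟪F j, toE (M *ᵥ fromE (F j))⟫
              = ⟪F j, toE (Zm *ᵥ fromE (F j))⟫
                + ⟪F j, toE ((M - Zm) *ᵥ fromE (F j))⟫ := by
            rw [sub_mulVec, toE_sub, inner_sub_right]; ring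
          have hqeq : ⟪F j, toE (Zm *ᵥ fromE (F j))⟫
              = ∑ i, p i * ⟪z i, F j⟫ ^ 2 := by
            rw [hZm]; exact inner_Z p z _
          have hq0 : 0 ≤ ∑ i, p i * ⟪z i, F j⟫ ^ 2 :=
            Finset.sum_nonneg fun i _ => mul_nonneg (hp i) (sq_nonneg _)
          have hee : |⟪F j, toE ((M - Zm) *ᵥ fromE (F j))⟫| ≤ ε := by
            have h15 := inner_A_abs_le (M - Zm) (F j)
            rwa [hv1, one_pow, mul_one] at h15
          have habs := abs_le.mp hee
          calc σ ≤ |lam j| := hσle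
            _ = |(∑ i, p i * ⟪z i, F j⟫ ^ 2)
                  + ⟪F j, toE ((M - Zm) *ᵥ fromE (F j))⟫| := by
                rw [← hlam, hsplit, hqeq]
            _ ≤ (∑ i, p i * ⟪z i, F j⟫ ^ 2) + ε := by
                have h16 := abs_add_le (∑ i, p i * ⟪z i, F j⟫ ^ 2)
                  (⟪F j, toE ((M - Zm) *ᵥ fromE (F j))⟫)
                rw [abs_of_nonneg hq0] at h16
                linarith
        have hsums := Finset.sum_le_sum (fun j (_ : j ∈ Finset.univ) => hq j)
        have hcard : ∑ _j : Fin (ℓ+1), σ = ((ℓ:ℝ)+1) * σ := by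
          rw [Finset.sum_const, Finset.card_univ, Fintype.card_fin, nsmul_eq_mul]
          push_cast; ring
        have hrhs : ∑ j : Fin (ℓ+1), ((∑ i, p i * ⟪z i, F j⟫ ^ 2) + ε)
            = (∑ j : Fin (ℓ+1), ∑ i, p i * ⟪z i, F j⟫ ^ 2) + ((ℓ:ℝ)+1) * ε := by
          rw [Finset.sum_add_distrib, Finset.sum_const, Finset.card_univ,
            Fintype.card_fin, nsmul_eq_mul]
          push_cast; ring
        have hpar : ∀ i : Fin k, ∑ j : Fin (ℓ+1), ⟪z i, F j⟫ ^ 2 ≤ ‖z i‖ ^ 2 := by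
          intro i
          have h20 := sum_comp_le (fun j : Fin (ℓ+1) =>
              s (⟨d - 1 - (j:ℕ), by have := j.isLt; omega⟩ : Fin d)) hνinj
            (fun m => ⟪z i, hM.eigenvectorBasis m⟫ ^ 2) (fun m => sq_nonneg _)
          have h21 : ∑ m, ⟪z i, hM.eigenvectorBasis m⟫ ^ 2 = ‖z i‖ ^ 2 := by
            rw [← parseval hM.eigenvectorBasis (z i)]
            exact Finset.sum_congr rfl fun m _ => by rw [real_inner_comm]
          exact le_trans h20 (le_of_eq h21)
        have hdouble : ∑ j : Fin (ℓ+1), ∑ i, p i * ⟪z i, F j⟫ ^ 2 ≤ T := by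
          rw [Finset.sum_comm]
          calc ∑ i, ∑ j : Fin (ℓ+1), p i * ⟪z i, F j⟫ ^ 2
              ≤ ∑ i, p i * ‖z i‖ ^ 2 := by
                refine Finset.sum_le_sum fun i _ => ?_
                rw [← Finset.mul_sum]
                exact mul_le_mul_of_nonneg_left (hpar i) (hp i)
            _ ≤ ∑ i, p i * T := Finset.sum_le_sum fun i _ =>
                mul_le_mul_of_nonneg_left (hT i) (hp i)
            _ = T := by rw [← Finset.sum_mul, hp1, one_mul]
        rw [hcard] at hsums
        rw [hrhs] at hsums
        linarith
      · -- k ≤ ℓ → σ ≤ ε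
        intro hkl
        have hσ0 : 0 ≤ σ := by rw [hσe]; exact abs_nonneg _
        have hνinj : Function.Injective (fun j : Fin (k+1) =>
            s (⟨d - 1 - (j:ℕ), by have := j.isLt; omega⟩ : Fin d)) := by
          intro a b hab
          have h2 := s.injective hab
          have h3 : d - 1 - (a:ℕ) = d - 1 - (b:ℕ) := congrArg Fin.val h2
          have ha := a.isLt; have hb := b.isLt
          exact Fin.ext (by omega)
        set f : Fin (k+1) → EuclideanSpace ℝ (Fin d) := fun j =>
          hM.eigenvectorBasis (s ⟨d - 1 - (j:ℕ), by have := j.isLt; omega⟩) with hfe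
        set lam : Fin (k+1) → ℝ := fun j =>
          hM.eigenvalues (s ⟨d - 1 - (j:ℕ), by have := j.isLt; omega⟩) with hlame
        have hfo : Orthonormal ℝ f := hM.eigenvectorBasis.orthonormal.comp _ hνinj
        have hfM : ∀ j, M *ᵥ fromE (f j) = lam j • fromE (f j) := fun j =>
          hM.mulVec_eigenvectorBasis _
        have hflam : ∀ j, σ ≤ |lam j| := by
          intro j
          refine hmono _ _ (Fin.mk_le_mk.mpr ?_)
          have := j.isLt; omega
        set A : Matrix (Fin k) (Fin (k+1)) ℝ := Matrix.of (fun i j => ⟪z i, f j⟫) with hAe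
        have hninj : ¬ Function.Injective A.mulVecLin := by
          intro hinj
          have h7 := LinearMap.finrank_le_finrank_of_injective hinj
          rw [Module.finrank_fin_fun, Module.finrank_fin_fun] at h7
          omega
        obtain ⟨c, hc0, hAc⟩ : ∃ c : Fin (k+1) → ℝ, c ≠ 0 ∧ A *ᵥ c = 0 := by
          obtain ⟨a, b, hab, hne⟩ := Function.not_injective_iff.mp hninj
          refine ⟨a - b, sub_ne_zero.mpr hne, ?_⟩
          have h8 : A.mulVecLin (a - b) = 0 := by rw [map_sub, hab, sub_self]
          simpa [Matrix.mulVecLin_apply] using h8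
        set w := ∑ j : Fin (k+1), c j • f j with hwe
        have hw2 : ‖w‖ ^ 2 = ∑ j, c j ^ 2 := by
          rw [← real_inner_self_eq_norm_sq, hwe]
          have h17 := hfo.inner_sum c c Finset.univ
          simpa [sq] using h17
        have hwpos : 0 < ∑ j, c j ^ 2 := by
          obtain ⟨j0, hj0⟩ := Function.ne_iff.mp hc0
          refine Finset.sum_pos' (fun j _ => sq_nonneg _) ⟨j0, Finset.mem_univ _, ?_⟩
          have h18 : c j0 ≠ 0 := hj0
          positivity
        have hwz : ∀ i, ⟪z i, w⟫ = 0 := by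
          intro i
          have h9 := congrFun hAc i
          calc ⟪z i, w⟫ = ∑ j, c j * ⟪z i, f j⟫ := by
                rw [hwe, inner_sum]
                exact Finset.sum_congr rfl fun j _ => real_inner_smul_right _ _ _
            _ = (A *ᵥ c) i := by
                rw [show (A *ᵥ c) i = ∑ j, A i j * c j from rfl]
                refine Finset.sum_congr rfl fun j _ => ?_
                rw [hAe, Matrix.of_apply, mul_comm]
            _ = 0 := h9
        have hZw : toE (Zm *ᵥ fromE w) = 0 := by
          rw [hZm, Z_mulVec]
          exact Finset.sum_eq_zero fun i _ => by rw [hwz i, mul_zero, zero_smul]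
        have hMwE : toE (M *ᵥ fromE w) = toE ((M - Zm) *ᵥ fromE w) := by
          rw [sub_mulVec, toE_sub, hZw, sub_zero]
        have hMwnorm : ‖toE (M *ᵥ fromE w)‖ ≤ ε * ‖w‖ := by
          rw [hMwE]; exact norm_mulVec_le _ w
        have hMw : toE (M *ᵥ fromE w) = ∑ j : Fin (k+1), (c j * lam j) • f j := by
          rw [hwe]
          have h11 : M *ᵥ fromE (∑ j : Fin (k+1), c j • f j)
              = ∑ j : Fin (k+1), c j • (M *ᵥ fromE (f j)) := by
            have h12 : fromE (∑ j : Fin (k+1), c j • f j)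
                = ∑ j : Fin (k+1), c j • fromE (f j) := WithLp.ofLp_sum 2 _ _ _
            rw [h12]
            calc M *ᵥ (∑ j : Fin (k+1), c j • fromE (f j))
                = M.mulVecLin (∑ j : Fin (k+1), c j • fromE (f j)) :=
                  (Matrix.mulVecLin_apply _ _).symm
              _ = ∑ j : Fin (k+1), c j • M.mulVecLin (fromE (f j)) := by
                  rw [map_sum]
                  exact Finset.sum_congr rfl fun j _ => map_smul _ _ _
              _ = ∑ j : Fin (k+1), c j • (M *ᵥ fromE (f j)) := by
                  exact Finset.sum_congr rfl fun j _ => by rw [Matrix.mulVecLin_apply]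
          rw [h11, toE_sum]
          refine Finset.sum_congr rfl fun j _ => ?_
          rw [hfM j, smul_smul, toE_smul, toE_fromE]
        have hMw2 : ‖toE (M *ᵥ fromE w)‖ ^ 2 = ∑ j, (c j * lam j) ^ 2 := by
          rw [← real_inner_self_eq_norm_sq, hMw]
          have h19 := hfo.inner_sum (fun j => c j * lam j) (fun j => c j * lam j) Finset.univ
          simpa [sq] using h19
        have h6 : σ ^ 2 * (∑ j, c j ^ 2) ≤ ∑ j, (c j * lam j) ^ 2 := by
          rw [Finset.mul_sum]
          refine Finset.sum_le_sum fun j _ => ?_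
          have hl := hflam j
          have hsq : σ ^ 2 ≤ lam j ^ 2 := by
            rw [← sq_abs (lam j)]
            exact pow_le_pow_left₀ hσ0 hl 2
          calc σ ^ 2 * c j ^ 2 ≤ lam j ^ 2 * c j ^ 2 :=
                mul_le_mul_of_nonneg_right hsq (sq_nonneg _)
            _ = (c j * lam j) ^ 2 := by ring
        have h7 : ∑ j, (c j * lam j) ^ 2 ≤ ε ^ 2 * ∑ j, c j ^ 2 := by
          have h13 : ‖toE (M *ᵥ fromE w)‖ ^ 2 ≤ (ε * ‖w‖) ^ 2 :=
            pow_le_pow_left₀ (norm_nonneg _) hMwnorm 2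
          rw [hMw2, mul_pow, hw2] at h13
          exact h13
        have h14 : σ ^ 2 ≤ ε ^ 2 := le_of_mul_le_mul_right (le_trans h6 h7) hwpos
        exact le_of_pow_le_pow_left₀ two_ne_zero hε0 h14
    · -- ℓ = d
      have hbij : Function.Bijective (fun j : Fin ℓ =>
          s (⟨d - 1 - (j:ℕ), by have := j.isLt; omega⟩ : Fin d)) :=
        (Fintype.bijective_iff_injective_and_card _).mpr ⟨hι, by simp [hld]⟩
      have hsum : ∑ j, ⟪u j, z 0⟫ • u j = z 0 := by
        calc ∑ j, ⟪u j, z 0⟫ • u j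
            = ∑ j, (fun m => ⟪B m, z 0⟫ • B m) ((Equiv.ofBijective _ hbij) j) :=
              Finset.sum_congr rfl fun j _ => by rw [hu j]; rfl
          _ = ∑ m, ⟪B m, z 0⟫ • B m := Equiv.sum_comp (Equiv.ofBijective _ hbij) (fun m => ⟪B m, z 0⟫ • B m)
          _ = z 0 := B.sum_repr' (z 0)
      have hx0 : x = 0 := by rw [hx, hsum, sub_self]
      have hA : p 0 * ‖x‖ ^ 2 ≤ 0 + ε := by rw [hx0]; simpa using hε0
      have hBB : ((ℓ:ℝ) + 1) * (0:ℝ) ≤ T + ((ℓ:ℝ) + 1) * ε := by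
        rw [mul_zero]; exact add_nonneg hT0 (mul_nonneg hL0.le hε0)
      exact ⟨0, le_refl 0, hA, hBB, fun _ => hε0⟩
  obtain ⟨σ', hσ'0, hσ'1, hσ'2, hσ'3⟩ := hkey
  constructor
  · intro hlk
    rw [le_div_iff₀ (by positivity)]
    nlinarith [mul_le_mul_of_nonneg_left hσ'1 (le_of_lt hL0)]
  · intro hkl
    have h6 := hσ'3 hkl
    rw [le_div_iff₀ hp0]
    nlinarith
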